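/- Let (X,d) be a separable metric space such that the action (Iso(X),X) is Cauchy-indivisible. If {g_n} is a sequence in Iso(X) converging pointwise on X to some f ∈ C(X,X), then the extensions ĝ_n converge pointwise on X̂ to the continuous extension f̂ of f, and f̂ is a surjective isometry of X̂ (f̂ ∈ Iso(X̂)). -/
import Mathlib


open Filter Topology Set UniformSpace

noncomputable section

/-- The topology of pointwise convergence on the group of surjective isometries of `X`. -/
instance isoPointwiseTopology (X : Type*) [MetricSpace X] : TopologicalSpace (X ≃ᵢ X) :=
  TopologicalSpace.induced (fun g => (g : X → X)) Pi.topologicalSpace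

/-- A net `g` diverges (`g_i → ∞`), i.e. it has no convergent subnet; equivalently,
no cluster point. -/
def DivergentNet {G : Type*} [TopologicalSpace G] {ι : Type*} [Preorder ι]
    (g : ι → G) : Prop :=
  ∀ h : G, ¬ MapClusterPt h atTop g

/-- A sequence `g` diverges (`g_n → ∞`), i.e. it has no convergent subsequence. -/
def DivergentSeq {G : Type*} [TopologicalSpace G] (g : ℕ → G) : Prop :=
  ∀ φ : ℕ → ℕ, StrictMono φ → ∀ h : G, ¬ Tendsto (g ∘ φ) atTop (𝓝 h)

/-- The natural evaluation action of `Iso(X)` on `X` is Cauchy-indivisible: whenever a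
net `g` in `Iso(X)` has no convergent subnet and `(g_i x)` is a Cauchy net for some
`x`, then `(g_i y)` is a Cauchy net for every `y`. -/
def IsoCauchyIndivisible (X : Type*) [MetricSpace X] : Prop :=
  ∀ (ι : Type*) [Nonempty ι] [Preorder ι] [IsDirected ι (· ≤ ·)],
    ∀ g : ι → X ≃ᵢ X, DivergentNet g →
      (∃ x : X, Cauchy (map (fun i => g i x) atTop)) →
      ∀ y : X, Cauchy (map (fun i => g i y) atTop)

/-- Properness of the isometric evaluation action, expressed through emptiness of all
limit sets `L(x)`: no net in `Iso(X)` without convergent subnet has `(g_i x)`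
converging in `X`. -/
def IsoProperLimits (X : Type*) [MetricSpace X] : Prop :=
  ∀ (ι : Type*) [Nonempty ι] [Preorder ι] [IsDirected ι (· ≤ ·)],
    ∀ g : ι → X ≃ᵢ X, DivergentNet g →
      ∀ x y : X, ¬ Tendsto (fun i => g i x) atTop (𝓝 y)

/-- The canonical lift `ĝ` of an isometry of `X` to the completion `X̂`. -/
def hatIso {X : Type*} [MetricSpace X] (g : X ≃ᵢ X) : Completion X → Completion X :=
  Completion.map (g : X → X)

/-- The lifted group `{ĝ : g ∈ Iso(X)}` inside the selfmaps of `X̂`. -/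
def hatIsoSet (X : Type*) [MetricSpace X] : Set (Completion X → Completion X) :=
  Set.range (hatIso (X := X))

/-- The Ellis semigroup `E`: the closure of the lifted group `{ĝ}` in the topology of
pointwise convergence on selfmaps of `X̂`. -/
def Ellis (X : Type*) [MetricSpace X] : Set (Completion X → Completion X) :=
  closure (hatIsoSet X)

/-- The set `H` of pointwise limits on `X̂` of divergent sequences of lifted isometries. -/
def Hset (X : Type*) [MetricSpace X] : Set (Completion X → Completion X) :=
  { h | Continuous h ∧ ∃ g : ℕ → X ≃ᵢ X, DivergentSeq g ∧
      Tendsto (fun n => hatIso (g n)) atTop (𝓝 h) }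

/-- The set `X_l ⊆ X̂` of limit points of the action `(Iso(X), X)` in the completion. -/
def Xl (X : Type*) [MetricSpace X] : Set (Completion X) :=
  { y | ∃ (g : ℕ → X ≃ᵢ X) (x : X), DivergentSeq g ∧
      CauchySeq (fun n => g n x) ∧
      Tendsto (fun n => ((g n x : X) : Completion X)) atTop (𝓝 y) }

/-- The set `X_p ⊆ X̂` of special limit points of the action `(Iso(X), X)`. -/
def Xp (X : Type*) [MetricSpace X] : Set (Completion X) :=
  { y | ∃ (g : ℕ → X ≃ᵢ X) (x : X), DivergentSeq g ∧
      CauchySeq (fun n => g n x) ∧ CauchySeq (fun n => (g n).symm x) ∧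
      Tendsto (fun n => ((g n x : X) : Completion X)) atTop (𝓝 y) }

/-- `X ∪ X_l`, with `X` identified with its image in the completion `X̂`. -/
def XcupXl (X : Type*) [MetricSpace X] : Set (Completion X) :=
  Set.range ((↑) : X → Completion X) ∪ Xl X

/-- `X ∪ X_p`, with `X` identified with its image in the completion `X̂`. -/
def XcupXp (X : Type*) [MetricSpace X] : Set (Completion X) :=
  Set.range ((↑) : X → Completion X) ∪ Xp X

/-- The Ellis semigroup is a group: every element has a two-sided inverse in `E`
(under composition). -/
def EllisIsGroup (X : Type*) [MetricSpace X] : Prop :=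
  ∀ f ∈ Ellis X, ∃ g ∈ Ellis X, f ∘ g = id ∧ g ∘ f = id



private def uliftNatOrderIso : ULift ℕ ≃o ℕ :=
  { toEquiv := Equiv.ulift, map_rel_iff' := Iff.rfl }

private lemma mapCompletion_isometry {X : Type*} [MetricSpace X] {f : X → X}
    (hf : Isometry f) : Isometry (Completion.map f) := by
  apply Isometry.of_dist_eq
  intro ξ η
  refine Completion.induction_on₂ ξ η ?_ ?_
  · exact isClosed_eq
      ((Completion.continuous_map.comp continuous_fst).dist
        (Completion.continuous_map.comp continuous_snd))
      (continuous_fst.dist continuous_snd)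
  · intro a b
    rw [Completion.map_coe hf.uniformContinuous, Completion.map_coe hf.uniformContinuous,
      Completion.dist_eq, Completion.dist_eq, hf.dist_eq]

private lemma extensionCompletion_isometry {X : Type*} [MetricSpace X]
    {f : X → Completion X} (hf : Isometry f) : Isometry (Completion.extension f) := by
  apply Isometry.of_dist_eq
  intro ξ η
  refine Completion.induction_on₂ ξ η ?_ ?_
  · exact isClosed_eq
      ((Completion.continuous_extension.comp continuous_fst).dist
        (Completion.continuous_extension.comp continuous_snd))
      (continuous_fst.dist continuous_snd)
  · intro a b
    rw [Completion.extension_coe hf.uniformContinuous, Completion.extension_coe hf.uniformContinuous,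
      Completion.dist_eq, hf.dist_eq]

private lemma key_lemma {X : Type*} [MetricSpace X] (g : ℕ → X ≃ᵢ X) (f : X → X)
    (hconv : ∀ x : X, Tendsto (fun n => g n x) atTop (𝓝 (f x)))
    (f' : X → Completion X) (hf'iso : Isometry f')
    (hf'f : ∀ z : X, f' (f z) = (z : Completion X)) :
    ∃ F : Completion X ≃ᵢ Completion X,
      (∀ x : X, F (x : Completion X) = ((f x : X) : Completion X)) ∧
      ∀ ξ : Completion X, Tendsto (fun n => hatIso (g n) ξ) atTop (𝓝 (F ξ)) := by
  have hfIso : Isometry f := by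
    apply Isometry.of_dist_eq
    intro x y
    have h1 : Tendsto (fun n => dist (g n x) (g n y)) atTop (𝓝 (dist (f x) (f y))) :=
      (hconv x).dist (hconv y)
    have h2 : (fun n => dist (g n x) (g n y)) = fun _ => dist x y := by
      funext n; exact (g n).dist_eq x y
    rw [h2] at h1
    exact tendsto_nhds_unique h1 tendsto_const_nhds
  set Fm : Completion X → Completion X := Completion.map f with hFmdef
  have hFmIso : Isometry Fm := mapCompletion_isometry hfIso
  have hFmcoe : ∀ x : X, Fm (x : Completion X) = ((f x : X) : Completion X) := fun x =>
    Completion.map_coe hfIso.uniformContinuous x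
  set F' : Completion X → Completion X := Completion.extension f' with hF'def
  have hF'Iso : Isometry F' := extensionCompletion_isometry hf'iso
  have hF'coe : ∀ x : X, F' (x : Completion X) = f' x := fun x =>
    Completion.extension_coe hf'iso.uniformContinuous x
  have hleft : ∀ ξ, F' (Fm ξ) = ξ := by
    intro ξ
    refine Completion.induction_on ξ ?_ ?_
    · exact isClosed_eq
        (Completion.continuous_extension.comp Completion.continuous_map) continuous_id
    · intro a
      rw [hFmcoe, hF'coe, hf'f]
  have hright : ∀ ξ, Fm (F' ξ) = ξ := fun ξ => hF'Iso.injective (hleft (F' ξ))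
  refine ⟨⟨⟨Fm, F', hleft, hright⟩, hFmIso⟩, hFmcoe, ?_⟩
  intro ξ
  rw [Metric.tendsto_atTop]
  intro ε hε
  obtain ⟨x, hx⟩ := Metric.denseRange_iff.mp Completion.denseRange_coe ξ (ε/3) (by linarith)
  obtain ⟨N, hN⟩ := (Metric.tendsto_atTop.mp (hconv x)) (ε/3) (by linarith)
  refine ⟨N, fun n hn => ?_⟩
  have hgIso : Isometry (hatIso (g n)) := mapCompletion_isometry (g n).isometry
  have hgcoe : hatIso (g n) (x : Completion X) = ((g n x : X) : Completion X) :=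
    Completion.map_coe (g n).isometry.uniformContinuous x
  have hx' : dist ((x : Completion X)) ξ < ε/3 := by rw [dist_comm]; exact hx
  have hN' := hN n hn
  calc dist (hatIso (g n) ξ) (Fm ξ)
      ≤ dist (hatIso (g n) ξ) (hatIso (g n) (x : Completion X))
        + dist (hatIso (g n) (x : Completion X)) (Fm (x : Completion X))
        + dist (Fm (x : Completion X)) (Fm ξ) := dist_triangle4 _ _ _ _
    _ = dist ξ (x : Completion X) + dist ((g n x : X) : Completion X) ((f x : X) : Completion X)
        + dist ((x : Completion X)) ξ := by
        rw [hgIso.dist_eq, hFmIso.dist_eq, hgcoe, hFmcoe]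
    _ = dist ξ (x : Completion X) + dist (g n x) (f x) + dist ((x : Completion X)) ξ := by
        rw [Completion.dist_eq]
    _ < ε/3 + ε/3 + ε/3 := by
        have hx'' : dist ξ ((x : Completion X)) < ε/3 := hx
        linarith
    _ = ε := by ring

/-- Proposition 5.7: if a sequence `(g_n)` in `Iso(X)` converges pointwise on `X` to a
continuous map `f : X → X`, then the lifts `ĝ_n` converge pointwise on `X̂` to the
continuous extension of `f`, which is a surjective isometry of `X̂`. -/
theorem hat_tendsto_isometryEquiv_of_pointwise_limit (X : Type*) [MetricSpace X]
    [TopologicalSpace.SeparableSpace X] (hCI : IsoCauchyIndivisible X)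
    (g : ℕ → X ≃ᵢ X) (f : X → X) (hf : Continuous f)
    (hconv : ∀ x : X, Tendsto (fun n => g n x) atTop (𝓝 (f x))) :
    ∃ F : Completion X ≃ᵢ Completion X,
      (∀ x : X, F (x : Completion X) = ((f x : X) : Completion X)) ∧
      ∀ ξ : Completion X, Tendsto (fun n => hatIso (g n) ξ) atTop (𝓝 (F ξ)) := by
  by_cases hD : ∃ h : X ≃ᵢ X, MapClusterPt h atTop g
  · obtain ⟨h, hh⟩ := hD
    have heq : ∀ x : X, h x = f x := by
      intro x
      have hev : Continuous (fun e : X ≃ᵢ X => e x) :=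
        (continuous_apply x).comp continuous_induced_dom
      have hh' : ClusterPt h (map g atTop) := hh
      have ht : Tendsto (fun e : X ≃ᵢ X => e x) (map g atTop)
          (map (fun n => g n x) atTop) := by
        rw [tendsto_map'_iff]
        exact tendsto_map
      have hc : ClusterPt (h x) (map (fun n => g n x) atTop) :=
        hh'.map hev.continuousAt ht
      exact eq_of_nhds_neBot (hc.mono (hconv x))
    have hiso : Isometry (fun z : X => ((h.symm z : X) : Completion X)) :=
      Completion.coe_isometry.comp h.symm.isometry
    have hf'f : ∀ z : X, ((h.symm (f z) : X) : Completion X) = (z : Completion X) := by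
      intro z
      rw [← heq z, h.symm_apply_apply]
    exact key_lemma g f hconv _ hiso hf'f
  · push_neg at hD
    rcases isEmpty_or_nonempty X with hE | hne
    · exfalso
      apply hD (g 0)
      have hg0 : g = fun _ => g 0 := by
        funext n; exact IsometryEquiv.ext fun x => hE.elim x
      have ht : Tendsto g atTop (𝓝 (g 0)) := by rw [hg0]; exact tendsto_const_nhds
      exact ht.mapClusterPt
    · have hσcont : Continuous (fun e : X ≃ᵢ X => e.symm) := by
        refine continuous_induced_rng.mpr ?_
        refine continuous_pi fun x => continuous_iff_continuousAt.mpr fun e₀ => ?_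
        have hev : Continuous (fun e : X ≃ᵢ X => e (e₀.symm x)) :=
          (continuous_apply (e₀.symm x)).comp continuous_induced_dom
        refine tendsto_iff_dist_tendsto_zero.mpr ?_
        have h2 : (fun e : X ≃ᵢ X => dist (e.symm x) (e₀.symm x))
            = fun e : X ≃ᵢ X => dist x (e (e₀.symm x)) := by
          funext e
          rw [← e.dist_eq (e.symm x) (e₀.symm x), e.apply_symm_apply]
        show Tendsto (fun e : X ≃ᵢ X => dist (e.symm x) (e₀.symm x)) (𝓝 e₀) (𝓝 0)
        rw [h2]
        have h3 : Tendsto (fun e : X ≃ᵢ X => e (e₀.symm x)) (𝓝 e₀)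
            (𝓝 (e₀ (e₀.symm x))) := hev.continuousAt
        rw [e₀.apply_symm_apply] at h3
        simpa using Tendsto.dist
          (tendsto_const_nhds : Tendsto (fun _ : X ≃ᵢ X => x) (𝓝 e₀) (𝓝 x)) h3
      have hDsymm : DivergentNet (fun n => (g n).symm) := by
        intro p hp
        apply hD p.symm
        have hp' : ClusterPt p (map (fun n => (g n).symm) atTop) := hp
        have ht : Tendsto (fun e : X ≃ᵢ X => e.symm)
            (map (fun n => (g n).symm) atTop) (map g atTop) := by
          rw [tendsto_map'_iff]
          have hcomp : ((fun e : X ≃ᵢ X => e.symm) ∘ fun n => (g n).symm) = g := by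
            funext n; simp
          rw [hcomp]
          exact tendsto_map
        exact hp'.map hσcont.continuousAt ht
      set x₀ := Classical.arbitrary X with hx₀def
      have hw : Tendsto (fun n => (g n).symm (f x₀)) atTop (𝓝 x₀) := by
        refine tendsto_iff_dist_tendsto_zero.mpr ?_
        have h2 : (fun n => dist ((g n).symm (f x₀)) x₀) = fun n => dist (f x₀) (g n x₀) := by
          funext n
          rw [← (g n).dist_eq ((g n).symm (f x₀)) x₀, (g n).apply_symm_apply]
        rw [h2]
        simpa using Tendsto.dist
          (tendsto_const_nhds : Tendsto (fun _ : ℕ => f x₀) atTop (𝓝 (f x₀))) (hconv x₀)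
      have hdown : Filter.map ULift.down (atTop : Filter (ULift ℕ)) = atTop :=
        OrderIso.map_atTop uliftNatOrderIso
      have hDU : DivergentNet (fun i : ULift ℕ => (g i.down).symm) := by
        intro p hp
        apply hDsymm p
        have hm : map (fun i : ULift ℕ => (g i.down).symm) (atTop : Filter (ULift ℕ))
            = map (fun n => (g n).symm) atTop := by
          rw [← hdown, Filter.map_map]
          rfl
        have hp' : ClusterPt p (map (fun i : ULift ℕ => (g i.down).symm) atTop) := hp
        rw [hm] at hp'
        exact hp'
      have hCU : ∃ x : X, Cauchy (map (fun i : ULift ℕ => (g i.down).symm x) atTop) := by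
        refine ⟨f x₀, ?_⟩
        have hm : map (fun i : ULift ℕ => (g i.down).symm (f x₀)) (atTop : Filter (ULift ℕ))
            = map (fun n => (g n).symm (f x₀)) atTop := by
          rw [← hdown, Filter.map_map]
          rfl
        rw [hm]
        exact hw.cauchySeq
      have hallC : ∀ y : X, CauchySeq (fun n => (g n).symm y) := by
        intro y
        have h1 := hCI (ULift ℕ) (fun i => (g i.down).symm) hDU hCU y
        have hm : map (fun i : ULift ℕ => (g i.down).symm y) (atTop : Filter (ULift ℕ))
            = map (fun n => (g n).symm y) atTop := by
          rw [← hdown, Filter.map_map]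
          rfl
        rw [hm] at h1
        exact h1
      have hex : ∀ z : X, ∃ a : Completion X,
          Tendsto (fun n => (((g n).symm z : X) : Completion X)) atTop (𝓝 a) := by
        intro z
        apply cauchySeq_tendsto_of_complete
        exact (Completion.uniformContinuous_coe X).comp_cauchySeq (hallC z)
      choose f' hf' using hex
      have hf'iso : Isometry f' := by
        apply Isometry.of_dist_eq
        intro z w
        have h1 : Tendsto (fun n => dist ((((g n).symm z : X)) : Completion X)
            ((((g n).symm w : X)) : Completion X)) atTop (𝓝 (dist (f' z) (f' w))) :=
          (hf' z).dist (hf' w)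
        have h2 : (fun n => dist ((((g n).symm z : X)) : Completion X)
            ((((g n).symm w : X)) : Completion X)) = fun _ => dist z w := by
          funext n
          rw [Completion.dist_eq, IsometryEquiv.dist_eq]
        rw [h2] at h1
        exact tendsto_nhds_unique h1 tendsto_const_nhds
      have hf'f : ∀ z : X, f' (f z) = (z : Completion X) := by
        intro z
        refine tendsto_nhds_unique (hf' (f z)) ?_
        refine tendsto_iff_dist_tendsto_zero.mpr ?_
        have h2 : (fun n => dist ((((g n).symm (f z) : X)) : Completion X) ((z : X) : Completion X))
            = fun n => dist (f z) (g n z) := by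
          funext n
          rw [Completion.dist_eq, ← (g n).dist_eq ((g n).symm (f z)) z, (g n).apply_symm_apply]
        rw [h2]
        simpa using Tendsto.dist
          (tendsto_const_nhds : Tendsto (fun _ : ℕ => f z) atTop (𝓝 (f z))) (hconv z)
      exact key_lemma g f hconv f' hf'iso hf'f


end
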